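/- arXiv:1207.3119 — 2 statements merged into one kernel-verified Lean document; each statement's English description precedes it below -/
import Mathlib

section
/- Let F be a field of characteristic ≠ 2, let a, b, c ∈ F with d = b² − 4ac ≠ 0, let S = [[a, b/2],[b/2, c]], and define T(F) = {g ∈ GL₂(F) : ᵗg S g = det(g)·S}. Then T(F) = {x·I + y·ξ : x, y ∈ F, (x·I + y·ξ) invertible}, where ξ = [[b/2, c],[−a, −b/2]]; i.e., T(F) equals the group of invertible elements of the algebra F(ξ). -/
open Matrix in
theorem stmt2 (F : Type*) [Field F] (h2 : (2 : F) ≠ 0) (a b c : F)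
    (hd : b ^ 2 - 4 * a * c ≠ 0) :
    {g : Matrix (Fin 2) (Fin 2) F | IsUnit g ∧
        gᵀ * !![a, b / 2; b / 2, c] * g = g.det • !![a, b / 2; b / 2, c]}
      = {g : Matrix (Fin 2) (Fin 2) F | IsUnit g ∧
          ∃ x y : F, g = x • (1 : Matrix (Fin 2) (Fin 2) F) + y • !![b / 2, c; -a, -b / 2]} := by
  obtain ⟨β, hβ⟩ : ∃ β, b = 2 * β := ⟨b / 2, by field_simp⟩
  subst hβ
  rw [show (2 * β) / 2 = β by field_simp, show -(2 * β) / 2 = -β by field_simp]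
  have hd' : β ^ 2 - a * c ≠ 0 := by
    intro h; apply hd; linear_combination 4 * h
  ext g
  simp only [Set.mem_setOf_eq]
  constructor
  · rintro ⟨hu, heq⟩
    refine ⟨hu, ?_⟩
    have hdet : g.det ≠ 0 := by
      intro h
      have := (Matrix.isUnit_iff_isUnit_det g).mp hu
      rw [h] at this
      exact this.ne_zero rfl
    have hdet2 : g.det = g 0 0 * g 1 1 - g 0 1 * g 1 0 := Matrix.det_fin_two g
    rw [hdet2] at hdet
    have hE1 := congrFun (congrFun heq 0) 0
    have hE2 := congrFun (congrFun heq 0) 1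
    have hE3 := congrFun (congrFun heq 1) 1
    simp [Matrix.mul_apply, Fin.sum_univ_two, Matrix.det_fin_two, smul_eq_mul] at hE1 hE2 hE3
    have hT1 : c * (g 0 0 - g 1 1) - 2 * β * g 0 1 = 0 := by
      have h0 : (c * (g 0 0 - g 1 1) - 2 * β * g 0 1) * (g 0 0 * g 1 1 - g 0 1 * g 1 0) = 0 := by
        linear_combination g 0 1 * hE2 - g 0 0 * hE3
      rcases mul_eq_zero.mp h0 with h | h
      · exact h
      · exact absurd h hdet
    have hT2 : a * (g 0 0 - g 1 1) + 2 * β * g 1 0 = 0 := by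
      have h0 : (a * (g 0 0 - g 1 1) + 2 * β * g 1 0) * (g 0 0 * g 1 1 - g 0 1 * g 1 0) = 0 := by
        linear_combination g 1 1 * hE1 - g 1 0 * hE2
      rcases mul_eq_zero.mp h0 with h | h
      · exact h
      · exact absurd h hdet
    have hT3 : a * g 0 1 + c * g 1 0 = 0 := by
      have h0 : (a * g 0 1 + c * g 1 0) * (g 0 0 * g 1 1 - g 0 1 * g 1 0) = 0 := by
        linear_combination -(g 0 1 * hE1) + g 0 0 * hE2
      rcases mul_eq_zero.mp h0 with h | h
      · exact h
      · exact absurd h hdet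
    by_cases hb : β = 0
    · subst hb
      have ha : a ≠ 0 := by intro h; apply hd'; rw [h]; ring
      have hc : c ≠ 0 := by intro h; apply hd'; rw [h]; ring
      have hps : g 0 0 = g 1 1 := by
        have h' : c * (g 0 0 - g 1 1) = 0 := by linear_combination hT1
        rcases mul_eq_zero.mp h' with h | h
        · exact absurd h hc
        · linear_combination h
      refine ⟨g 0 0, g 0 1 / c, ?_⟩
      ext i j
      fin_cases i <;> fin_cases j <;>
        simp [Matrix.one_apply, smul_eq_mul] <;> (try field_simp) <;>
        first
          | ring1
          | linear_combination hT3 | linear_combination -hT3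
          | linear_combination 2 * hT3 | linear_combination -(2 * hT3)
          | linear_combination hps | linear_combination -hps
          | linear_combination c * hps | linear_combination -(c * hps)
    · have hb2 : 2 * β ≠ 0 := mul_ne_zero h2 hb
      refine ⟨(g 0 0 + g 1 1) / 2, (g 0 0 - g 1 1) / (2 * β), ?_⟩
      ext i j
      fin_cases i <;> fin_cases j <;>
        simp [Matrix.one_apply, smul_eq_mul] <;> (try field_simp) <;>
        first
          | ring1
          | linear_combination hT1 | linear_combination -hT1
          | linear_combination hT2 | linear_combination -hT2
          | linear_combination 2 * hT1 | linear_combination -(2 * hT1)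
          | linear_combination 2 * hT2 | linear_combination -(2 * hT2)
  · rintro ⟨hu, x, y, rfl⟩
    refine ⟨hu, ?_⟩
    ext i j
    fin_cases i <;> fin_cases j <;>
      simp [Matrix.mul_apply, Fin.sum_univ_two, Matrix.det_fin_two, Matrix.one_apply,
        Matrix.vecHead, Matrix.vecTail, smul_eq_mul] <;>
      ring
end

section
/- Let m be a positive integer. Then GL₂(o) = T(o)_m·Γ₀(p) ⊔ T(o)_m·[[0,1],[1,0]]·Γ₀(p), a disjoint union, where T(o)_m is as defined previously. -/
open Matrix in
theorem stmt13 (R : Type*) [CommRing R] [IsDomain R] [IsDiscreteValuationRing R]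
    (F : Type*) [Field F] [Algebra R F] [IsFractionRing R F]
    (ϖ : R) (hϖ : Irreducible ϖ)
    (a b : R) (c : Rˣ)
    (hd : b ^ 2 - 4 * a * (c : R) ≠ 0)
    (hdassum : IsSquare (b ^ 2 - 4 * a * (c : R)) → IsUnit (b ^ 2 - 4 * a * (c : R)))
    (S : Matrix (Fin 2) (Fin 2) F)
    (hS : S = !![algebraMap R F a, algebraMap R F b / 2;
                 algebraMap R F b / 2, algebraMap R F (c : R)])
    (m : ℕ) (hm : 1 ≤ m)
    (Γ₀ : Set (Matrix (Fin 2) (Fin 2) R))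
    (hΓ₀ : Γ₀ = {k | IsUnit k ∧ k 1 0 ∈ IsLocalRing.maximalIdeal R})
    (Tm : Set (Matrix (Fin 2) (Fin 2) R))
    (hTm : Tm = {g | IsUnit g ∧ ∃ t : Matrix (Fin 2) (Fin 2) R, IsUnit t ∧
        (t.map (algebraMap R F))ᵀ * S * t.map (algebraMap R F)
          = (t.map (algebraMap R F)).det • S ∧
        g.map (algebraMap R F) =
          !![(algebraMap R F ϖ)⁻¹ ^ m, 0; 0, 1] * t.map (algebraMap R F) *
            !![(algebraMap R F ϖ) ^ m, 0; 0, 1]}) :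
    ∀ g : Matrix (Fin 2) (Fin 2) R, IsUnit g →
      Xor' (∃ t ∈ Tm, ∃ k ∈ Γ₀, g = t * k)
        (∃ t ∈ Tm, ∃ k ∈ Γ₀, g = t * !![0, 1; 1, 0] * k) := by
  subst hS hΓ₀ hTm
  intro g hg
  set f := algebraMap R F with hf
  have hinj : Function.Injective f := IsFractionRing.injective R F
  have hϖ0 : ϖ ≠ 0 := hϖ.ne_zero
  have hϖF : f ϖ ≠ 0 := fun h => hϖ0 (hinj (by simpa using h))
  have hcan : (f ϖ)⁻¹ ^ m * (f ϖ) ^ m = 1 := by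
    rw [← mul_pow, inv_mul_cancel₀ hϖF, one_pow]
  have hϖp : ϖ ∈ IsLocalRing.maximalIdeal R := by
    rw [IsLocalRing.mem_maximalIdeal]; exact hϖ.not_isUnit
  have hϖmp : ϖ ^ m ∈ IsLocalRing.maximalIdeal R := by
    obtain ⟨m', rfl⟩ := Nat.exists_eq_add_of_le hm
    rw [pow_add, pow_one]
    exact Ideal.mul_mem_right _ _ hϖp
  have hmem_unit : ∀ x : R, x ∉ IsLocalRing.maximalIdeal R ↔ IsUnit x := by
    intro x
    rw [IsLocalRing.mem_maximalIdeal, mem_nonunits_iff, not_not]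
  -- b' : integral element mapping to 2 * (b/2)
  obtain ⟨b', hb'⟩ : ∃ b' : R, f b' = 2 * (f b / 2) := by
    by_cases h2 : (2 : F) = 0
    · exact ⟨0, by rw [h2, zero_mul, map_zero]⟩
    · exact ⟨b, by field_simp⟩
  -- facts about members of Tm
  have hTmem : ∀ h : Matrix (Fin 2) (Fin 2) R,
      (IsUnit h ∧ ∃ t : Matrix (Fin 2) (Fin 2) R, IsUnit t ∧
        (t.map f)ᵀ * !![f a, f b / 2; f b / 2, f (c : R)] * t.map f
          = (t.map f).det • !![f a, f b / 2; f b / 2, f (c : R)] ∧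
        h.map f = !![(f ϖ)⁻¹ ^ m, 0; 0, 1] * t.map f * !![(f ϖ) ^ m, 0; 0, 1]) →
      h 1 0 ∈ IsLocalRing.maximalIdeal R ∧ IsUnit (h 1 1) := by
    rintro h ⟨hu, t, htu, -, hmap⟩
    have h10 : f (h 1 0) = f (t 1 0) * f ϖ ^ m := by
      have := congrFun (congrFun hmap 1) 0
      simp [Matrix.map_apply, Matrix.mul_apply, Fin.sum_univ_two, Matrix.vecMul,
        dotProduct, Matrix.vecHead, Matrix.vecTail] at this
      linear_combination this
    have h10' : h 1 0 = t 1 0 * ϖ ^ m := by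
      apply hinj; rw [h10, _root_.map_mul, map_pow]
    have hm10 : h 1 0 ∈ IsLocalRing.maximalIdeal R := by
      rw [h10']; exact Ideal.mul_mem_left _ _ hϖmp
    refine ⟨hm10, ?_⟩
    have hdet : IsUnit h.det := (Matrix.isUnit_iff_isUnit_det h).mp hu
    rw [← hmem_unit]
    intro h11m
    have hdm : h.det ∈ IsLocalRing.maximalIdeal R := by
      rw [Matrix.det_fin_two]
      exact Ideal.sub_mem _ (Ideal.mul_mem_left _ _ h11m) (Ideal.mul_mem_left _ _ hm10)
    rw [IsLocalRing.mem_maximalIdeal, mem_nonunits_iff] at hdm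
    exact hdm hdet
  -- facts about members of Γ₀
  have hΓmem : ∀ k : Matrix (Fin 2) (Fin 2) R,
      (IsUnit k ∧ k 1 0 ∈ IsLocalRing.maximalIdeal R) → IsUnit (k 0 0) := by
    rintro k ⟨hu, hk10⟩
    have hdet : IsUnit k.det := (Matrix.isUnit_iff_isUnit_det k).mp hu
    rw [← hmem_unit]
    intro h00m
    have hdm : k.det ∈ IsLocalRing.maximalIdeal R := by
      rw [Matrix.det_fin_two]
      exact Ideal.sub_mem _ (Ideal.mul_mem_right _ _ h00m) (Ideal.mul_mem_left _ _ hk10)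
    rw [IsLocalRing.mem_maximalIdeal, mem_nonunits_iff] at hdm
    exact hdm hdet
  -- entry computations for products
  have hmulent : ∀ t k : Matrix (Fin 2) (Fin 2) R,
      (t * k) 1 0 = t 1 0 * k 0 0 + t 1 1 * k 1 0 := by
    intro t k
    simp [Matrix.mul_apply, Fin.sum_univ_two]
  have hmulwent : ∀ t k : Matrix (Fin 2) (Fin 2) R,
      (t * (!![0, 1; 1, 0] : Matrix (Fin 2) (Fin 2) R) * k) 1 0 = t 1 1 * k 0 0 + t 1 0 * k 1 0 := by
    intro t k
    simp [Matrix.mul_apply, Fin.sum_univ_two, Matrix.vecMul, dotProduct,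
      Matrix.vecHead, Matrix.vecTail]
  -- 1 ∈ Tm
  have hone : (1 : Matrix (Fin 2) (Fin 2) R) ∈
      {g : Matrix (Fin 2) (Fin 2) R | IsUnit g ∧ ∃ t : Matrix (Fin 2) (Fin 2) R, IsUnit t ∧
        (t.map f)ᵀ * !![f a, f b / 2; f b / 2, f (c : R)] * t.map f
          = (t.map f).det • !![f a, f b / 2; f b / 2, f (c : R)] ∧
        g.map f = !![(f ϖ)⁻¹ ^ m, 0; 0, 1] * t.map f * !![(f ϖ) ^ m, 0; 0, 1]} := by
    refine ⟨isUnit_one, 1, isUnit_one, ?_, ?_⟩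
    · rw [Matrix.map_one f (map_zero f) (map_one f)]
      simp
    · rw [Matrix.map_one f (map_zero f) (map_one f)]
      ext i j
      fin_cases i <;> fin_cases j <;>
        simp [Matrix.mul_apply, Fin.sum_univ_two, Matrix.one_apply, Matrix.vecMul,
          dotProduct, Matrix.vecHead, Matrix.vecTail] <;>
      first
        | linear_combination hcan
        | linear_combination (-1 : F) * hcan
        | ring
  -- the two cases
  by_cases hp : g 1 0 ∈ IsLocalRing.maximalIdeal R
  · left
    constructor
    · exact ⟨1, hone, g, ⟨hg, hp⟩, (one_mul g).symm⟩
    · rintro ⟨t, ht, k, hk, hgtk⟩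
      obtain ⟨ht10, ht11⟩ := hTmem t ht
      have hk00 : IsUnit (k 0 0) := hΓmem k hk
      have hunit : IsUnit (t 1 1 * k 0 0) := ht11.mul hk00
      rw [← hmem_unit] at hunit
      apply hunit
      have heq : t 1 1 * k 0 0 = g 1 0 - t 1 0 * k 1 0 := by
        rw [hgtk, hmulwent]; ring
      rw [heq]
      exact Ideal.sub_mem _ hp (Ideal.mul_mem_right _ _ ht10)
  · right
    have hg10 : IsUnit (g 1 0) := (hmem_unit _).mp hp
    constructor
    · -- construction of t and k
      set u : R := g 0 0 with hu
      set α : R := (c : R) * g 1 0 + ϖ ^ m * b' * u with hα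
      set t : Matrix (Fin 2) (Fin 2) R :=
        !![α, u * c; -(u * a * ϖ ^ (2 * m)), α - u * ϖ ^ m * b'] with ht
      set t' : Matrix (Fin 2) (Fin 2) R :=
        !![α, (u * ϖ ^ m) * c; -((u * ϖ ^ m) * a), α - (u * ϖ ^ m) * b'] with ht'
      have hdet_t : t.det = ((c : R) * g 1 0) ^ 2
          + ϖ ^ m * (b' * g 0 0 * ((c : R) * g 1 0))
          + ϖ ^ (2 * m) * (g 0 0 * g 0 0 * a * (c : R)) := by
        rw [ht, Matrix.det_fin_two_of, hα, hu]; ring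
      have hdet_unit : IsUnit t.det := by
        rw [← hmem_unit]
        intro hmd
        have h2m : ϖ ^ (2 * m) ∈ IsLocalRing.maximalIdeal R := by
          rw [two_mul, pow_add]
          exact Ideal.mul_mem_right _ _ hϖmp
        have hsq : ((c : R) * g 1 0) ^ 2 ∈ IsLocalRing.maximalIdeal R := by
          have heq : ((c : R) * g 1 0) ^ 2 = t.det
              - ϖ ^ m * (b' * g 0 0 * ((c : R) * g 1 0))
              - ϖ ^ (2 * m) * (g 0 0 * g 0 0 * a * (c : R)) := by
            rw [hdet_t]; ring
          rw [heq]
          exact Ideal.sub_mem _ (Ideal.sub_mem _ hmd (Ideal.mul_mem_right _ _ hϖmp))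
            (Ideal.mul_mem_right _ _ h2m)
        have hpr : (IsLocalRing.maximalIdeal R).IsPrime :=
          (IsLocalRing.maximalIdeal.isMaximal R).isPrime
        have hcg : (c : R) * g 1 0 ∈ IsLocalRing.maximalIdeal R := by
          rcases hpr.mem_or_mem (show ((c:R) * g 1 0) * ((c:R) * g 1 0) ∈ _ by
            rw [← sq]; exact hsq) with h | h <;> exact h
        rcases hpr.mem_or_mem hcg with h | h
        · exact ((hmem_unit _).mpr c.isUnit) h
        · exact ((hmem_unit _).mpr hg10) h
      have htu : IsUnit t := (Matrix.isUnit_iff_isUnit_det t).mpr hdet_unit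
      have hdet_eq : t'.det = t.det := by
        rw [ht', ht, Matrix.det_fin_two_of, Matrix.det_fin_two_of]; ring
      have ht'u : IsUnit t' := by
        rw [Matrix.isUnit_iff_isUnit_det, hdet_eq]; exact hdet_unit
      -- t ∈ Tm
      have htTm : t ∈ {g : Matrix (Fin 2) (Fin 2) R | IsUnit g ∧
          ∃ t : Matrix (Fin 2) (Fin 2) R, IsUnit t ∧
          (t.map f)ᵀ * !![f a, f b / 2; f b / 2, f (c : R)] * t.map f
            = (t.map f).det • !![f a, f b / 2; f b / 2, f (c : R)] ∧
          g.map f = !![(f ϖ)⁻¹ ^ m, 0; 0, 1] * t.map f * !![(f ϖ) ^ m, 0; 0, 1]} := by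
      -- goal 1 : torus relation ; goal 2 : conjugation relation
        refine ⟨htu, t', ht'u, ?_, ?_⟩
        · rw [ht']
          ext i j
          fin_cases i <;> fin_cases j <;>
            simp [Matrix.map_apply, Matrix.mul_apply, Fin.sum_univ_two, Matrix.vecMul,
              dotProduct, Matrix.vecHead, Matrix.vecTail, Matrix.transpose_apply,
              Matrix.det_fin_two, Matrix.smul_apply, smul_eq_mul,
              _root_.map_mul, map_sub, map_add, map_neg, map_pow, hb'] <;>
            ring
        · rw [ht, ht']
          ext i j
          fin_cases i <;> fin_cases j <;>
            simp [Matrix.map_apply, Matrix.mul_apply, Fin.sum_univ_two, Matrix.vecMul,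
              dotProduct, Matrix.vecHead, Matrix.vecTail,
              _root_.map_mul, map_sub, map_add, map_neg, map_pow] <;>
          first
            | linear_combination (-(f α)) * hcan
            | linear_combination (f α) * hcan
            | linear_combination (-(f u * f (c : R))) * hcan
            | linear_combination (f u * f (c : R)) * hcan
            | ring
      -- construct k
      set w : Matrix (Fin 2) (Fin 2) R := !![0, 1; 1, 0] with hw
      set k : Matrix (Fin 2) (Fin 2) R :=
        ((hdet_unit.unit⁻¹ : Rˣ) : R) • (w * t.adjugate * g) with hk
      have hww : w * w = 1 := by
        rw [hw]
        ext i j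
        fin_cases i <;> fin_cases j <;>
          simp [Matrix.mul_apply, Fin.sum_univ_two, Matrix.one_apply, Matrix.vecMul,
            dotProduct, Matrix.vecHead, Matrix.vecTail]
      have hgeq : g = t * w * k := by
        have h2 : t * w * (w * t.adjugate * g) = t * (w * w) * (t.adjugate * g) := by
          noncomm_ring
        have h1 : t * w * (w * t.adjugate * g) = t.det • g := by
          rw [h2, hww, mul_one, ← Matrix.mul_assoc, Matrix.mul_adjugate,
            Matrix.smul_mul, Matrix.one_mul]
        rw [hk, Matrix.mul_smul, h1, smul_smul]
        rw [show ((hdet_unit.unit⁻¹ : Rˣ) : R) * t.det = 1 by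
          nth_rewrite 2 [← hdet_unit.unit_spec]
          exact Units.inv_mul _]
        rw [one_smul]
      have hkdet : IsUnit k := by
        rw [Matrix.isUnit_iff_isUnit_det, hk, Matrix.det_smul, Matrix.det_mul,
          Matrix.det_mul]
        refine ((hdet_unit.unit⁻¹.isUnit).pow _).mul ((IsUnit.mul ?_ ?_).mul
          ((Matrix.isUnit_iff_isUnit_det g).mp hg))
        · rw [hw, Matrix.det_fin_two_of]
          simpa using isUnit_one.neg
        · rw [Matrix.det_adjugate]
          simpa using hdet_unit
      have hwag : (w * t.adjugate * g) 1 0 = 0 := by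
        rw [hw, ht]
        simp [Matrix.adjugate_fin_two_of, Matrix.mul_apply, Fin.sum_univ_two,
          Matrix.vecMul, dotProduct, Matrix.vecHead, Matrix.vecTail]
        rw [hα, hu]
        ring
      have hk10 : k 1 0 = 0 := by
        rw [hk, Matrix.smul_apply, hwag, smul_eq_mul, mul_zero]
      exact ⟨t, htTm, k, ⟨hkdet, by rw [hk10]; exact Ideal.zero_mem _⟩, hgeq⟩
    · rintro ⟨t, ht, k, hk, hgtk⟩
      apply hp
      obtain ⟨ht10, -⟩ := hTmem t ht
      obtain ⟨-, hk10⟩ := hk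
      rw [hgtk, hmulent]
      exact Ideal.add_mem _ (Ideal.mul_mem_right _ _ ht10) (Ideal.mul_mem_left _ _ hk10)
end
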